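/- For a Euclidean triangle with side lengths l₁, l₂, l₃ and opposite angles a₁, a₂, a₃, the 1-form w = Σᵢ (a_i/l_i) dl_i is closed on the open set of triples satisfying the strict triangle inequalities, i.e., ∂(a_i/l_i)/∂l_j = ∂(a_j/l_j)/∂l_i for all i,j. -/

import Mathlib

open Real

/-- The angle opposite the side of length `a` in a Euclidean triangle with side
lengths `a`, `b`, `c` (symmetric in `b`, `c`). -/
noncomputable def triAngle (a b c : ℝ) : ℝ :=
  Real.arccos ((b ^ 2 + c ^ 2 - a ^ 2) / (2 * b * c))

lemma triAngle_symm (a b c : ℝ) : triAngle a b c = triAngle a c b := by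
  unfold triAngle
  congr 1
  rw [mul_right_comm]
  ring_nf

lemma triAngle_deriv (a b c : ℝ) (ha : 0 < a) (hb : 0 < b) (hc : 0 < c)
    (t1 : a < b + c) (t2 : b < a + c) (t3 : c < a + b) :
    deriv (fun t => triAngle a t c) b
      = -((a^2 + b^2 - c^2) / (b * Real.sqrt ((a+b+c)*(-a+b+c)*(a-b+c)*(a+b-c)))) := by
  set P : ℝ := (a+b+c)*(-a+b+c)*(a-b+c)*(a+b-c) with hP
  have hPpos : 0 < P := by
    have : (0:ℝ) < a+b+c := by linarith
    apply mul_pos (mul_pos (mul_pos this (by linarith)) (by linarith)) (by linarith)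
  set u : ℝ := (b^2 + c^2 - a^2) / (2 * b * c) with hu
  have hbc : (2 * b * c) ≠ 0 := by positivity
  have key : 1 - u^2 = P / (2*b*c)^2 := by
    rw [hu, hP]
    field_simp
    ring
  have husq : u^2 < 1 := by
    nlinarith [div_pos hPpos (by positivity : (0:ℝ) < (2*b*c)^2)]
  have hu1 : u ≠ 1 := by intro h; rw [h] at husq; norm_num at husq
  have hu2 : u ≠ -1 := by intro h; rw [h] at husq; norm_num at husq
  have hsqrt : Real.sqrt (1 - u^2) = Real.sqrt P / (2*b*c) := by
    rw [key, Real.sqrt_div hPpos.le, Real.sqrt_sq (by positivity : (0:ℝ) ≤ 2*b*c)]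
  have hsP : 0 < Real.sqrt P := Real.sqrt_pos.mpr hPpos
  -- derivative of inner function
  have hinner : HasDerivAt (fun t : ℝ => (t^2 + c^2 - a^2) / (2 * t * c))
      ((b^2 - c^2 + a^2) / (2 * b^2 * c)) b := by
    have hnum : HasDerivAt (fun t : ℝ => t^2 + c^2 - a^2) (2*b) b := by
      simpa using (((hasDerivAt_pow 2 b).add_const (c^2)).sub_const (a^2))
    have hden : HasDerivAt (fun t : ℝ => 2 * t * c) (2*c) b := by
      simpa using (((hasDerivAt_id b).const_mul 2).mul_const c)
    have := hnum.div hden hbc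
    refine this.congr_deriv ?_
    field_simp
    ring
  have harc : HasDerivAt (fun t : ℝ => triAngle a t c)
      (-(1 / Real.sqrt (1 - u^2)) * ((b^2 - c^2 + a^2) / (2 * b^2 * c))) b := by
    have := (Real.hasDerivAt_arccos hu2 hu1).comp b hinner
    unfold triAngle
    exact this.congr_deriv (by ring)
  rw [harc.deriv, hsqrt]
  have h2 : Real.sqrt P ^ 2 = P := Real.sq_sqrt hPpos.le
  field_simp
  ring

lemma mixed (a b c : ℝ) (ha : 0 < a) (hb : 0 < b) (hc : 0 < c)
    (t1 : a < b + c) (t2 : b < a + c) (t3 : c < a + b) :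
    deriv (fun t => triAngle a t c / a) b = deriv (fun t => triAngle b t c / b) a := by
  rw [deriv_div_const, deriv_div_const, triAngle_deriv a b c ha hb hc t1 t2 t3,
    triAngle_deriv b a c hb ha hc t2 t1 (by linarith)]
  have : (b+a+c)*(-b+a+c)*(b-a+c)*(b+a-c) = (a+b+c)*(-a+b+c)*(a-b+c)*(a+b-c) := by ring
  rw [this]
  ring

/-- Rivin's 1-form `w = Σᵢ (aᵢ/lᵢ) dlᵢ` on Euclidean triangles is closed:
the mixed partials agree, `∂(aᵢ/lᵢ)/∂l_j = ∂(a_j/l_j)/∂lᵢ`. -/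
theorem rivin_one_form_closed (l1 l2 l3 : ℝ)
    (h1 : 0 < l1) (h2 : 0 < l2) (h3 : 0 < l3)
    (t1 : l1 < l2 + l3) (t2 : l2 < l1 + l3) (t3 : l3 < l1 + l2) :
    deriv (fun t => triAngle l1 t l3 / l1) l2 = deriv (fun t => triAngle l2 t l3 / l2) l1 ∧
    deriv (fun t => triAngle l1 l2 t / l1) l3 = deriv (fun t => triAngle l3 l2 t / l3) l1 ∧
    deriv (fun t => triAngle l2 l1 t / l2) l3 = deriv (fun t => triAngle l3 l1 t / l3) l2 := by
  refine ⟨mixed l1 l2 l3 h1 h2 h3 t1 t2 t3, ?_, ?_⟩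
  · have e1 : (fun t => triAngle l1 l2 t / l1) = (fun t => triAngle l1 t l2 / l1) := by
      funext t; rw [triAngle_symm]
    have e2 : (fun t => triAngle l3 l2 t / l3) = (fun t => triAngle l3 t l2 / l3) := by
      funext t; rw [triAngle_symm]
    rw [e1, e2]
    exact mixed l1 l3 l2 h1 h3 h2 (by linarith) (by linarith) (by linarith)
  · have e1 : (fun t => triAngle l2 l1 t / l2) = (fun t => triAngle l2 t l1 / l2) := by
      funext t; rw [triAngle_symm]
    have e2 : (fun t => triAngle l3 l1 t / l3) = (fun t => triAngle l3 t l1 / l3) := by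
      funext t; rw [triAngle_symm]
    rw [e1, e2]
    exact mixed l2 l3 l1 h2 h3 h1 (by linarith) (by linarith) (by linarith)
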